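/- Let $n, s, k$ be positive integers with $k \ge 2$, $s \ge 2$, $n \ge 2k + 6$ and $n \ge (k+1)s - 2k + 2$. If $s > 2$, then the signless Laplacian spectral radius of the graph $K_s \vee ((ks-2k+2)K_1 \cup K_{n-(k+1)s+2k-2})$ is at most the signless Laplacian spectral radius of the graph $K_2 \vee (2K_1 \cup K_{n-4})$ (the $s=2$ member of this family). -/

import Mathlib

open Classical in
/-- The adjacency matrix of a simple graph, with real entries. -/
noncomputable def adjMat {V : Type} [Fintype V] (G : SimpleGraph V) : Matrix V V ℝ :=
  fun i j => if G.Adj i j then 1 else 0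

/-- The largest real eigenvalue of a real matrix. -/
noncomputable def maxEig {V : Type} [Fintype V] (M : Matrix V V ℝ) : ℝ :=
  sSup {t : ℝ | ∃ x : V → ℝ, x ≠ 0 ∧ M.mulVec x = t • x}

/-- The spectral radius (largest adjacency eigenvalue) of a graph. -/
noncomputable def specRad {V : Type} [Fintype V] (G : SimpleGraph V) : ℝ :=
  maxEig (adjMat G)

/-- The signless Laplacian matrix `Q(G) = D(G) + A(G)`. -/
noncomputable def qMat {V : Type} [Fintype V] [DecidableEq V] (G : SimpleGraph V) :
    Matrix V V ℝ :=
  Matrix.diagonal (fun v => ∑ w, adjMat G v w) + adjMat G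

/-- The signless Laplacian spectral radius of a graph. -/
noncomputable def qRad {V : Type} [Fintype V] [DecidableEq V] (G : SimpleGraph V) : ℝ :=
  maxEig (qMat G)

/-- The graph `K_s ∨ (a K_1 ∪ K_{n-s-a})` on vertex set `Fin n`:
the first `s` vertices form a clique joined to everything, the next `a` vertices are
independent, and the last `n - s - a` vertices form a clique. -/
def modelA (n s a : ℕ) : SimpleGraph (Fin n) where
  Adj i j := i ≠ j ∧ ((i : ℕ) < s ∨ (j : ℕ) < s ∨ (s + a ≤ (i : ℕ) ∧ s + a ≤ (j : ℕ)))
  symm := ⟨by rintro i j ⟨h1, h2⟩; exact ⟨h1.symm, by tauto⟩⟩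
  loopless := ⟨fun i h => h.1 rfl⟩

/-- The graph `s K_1 ∨ (a K_1 ∪ K_{n-s-a})` on vertex set `Fin n`:
the first `s` vertices are independent but joined to everything else, the next `a`
vertices are independent, and the last `n - s - a` vertices form a clique. -/
def modelB (n s a : ℕ) : SimpleGraph (Fin n) where
  Adj i j := i ≠ j ∧ (((i : ℕ) < s ∧ ¬ (j : ℕ) < s) ∨ ((j : ℕ) < s ∧ ¬ (i : ℕ) < s) ∨
    (s + a ≤ (i : ℕ) ∧ s + a ≤ (j : ℕ)))
  symm := ⟨by rintro i j ⟨h1, h2⟩; exact ⟨h1.symm, by tauto⟩⟩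
  loopless := ⟨fun i h => h.1 rfl⟩

/-- `M` is a matching of `G`: a set of pairwise disjoint edges of `G`. -/
def IsMatchingIn {V : Type} (G : SimpleGraph V) (M : Finset (Sym2 V)) : Prop :=
  (↑M : Set (Sym2 V)) ⊆ G.edgeSet ∧
    ∀ e ∈ M, ∀ f ∈ M, e ≠ f → ∀ v : V, ¬(v ∈ e ∧ v ∈ f)

/-- `H` is an `S(k)`-factor of `G`: a spanning subgraph of `G` each of whose connected
components is isomorphic to a star `K_{1,m}` with `1 ≤ m ≤ k`. -/
def IsSkFactor {V : Type} [Fintype V] (G H : SimpleGraph V) (k : ℕ) : Prop :=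
  H ≤ G ∧ ∀ c : H.ConnectedComponent, ∃ m : ℕ, 1 ≤ m ∧ m ≤ k ∧
    Nonempty ((H.induce c.supp) ≃g completeBipartiteGraph Unit (Fin m))


section AuxSpectral
variable {V : Type} [Fintype V]

variable {V : Type} [Fintype V]

/-- Core: any eigenvalue of a nonneg matrix is at most max weighted row quotient. -/
lemma eigen_le_of_wit (M : Matrix V V ℝ) (hM : ∀ i j, 0 ≤ M i j)
    (w : V → ℝ) (hw : ∀ i, 0 < w i) (θ : ℝ)
    (h : ∀ i, M.mulVec w i ≤ θ * w i) (t : ℝ) (x : V → ℝ) (hx : x ≠ 0)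
    (hxe : M.mulVec x = t • x) : t ≤ θ := by
  obtain ⟨i0, hi0⟩ : ∃ i0, x i0 ≠ 0 := by
    by_contra hc
    push_neg at hc
    exact hx (funext fun i => hc i)
  have hne : Nonempty V := ⟨i0⟩
  obtain ⟨i, -, hi⟩ := Finset.exists_max_image (Finset.univ : Finset V)
    (fun j => |x j| / w j) ⟨i0, Finset.mem_univ _⟩
  have hxi : 0 < |x i| := by
    have h1 : 0 < |x i0| / w i0 := div_pos (abs_pos.2 hi0) (hw i0)
    have h2 : 0 < |x i| / w i := lt_of_lt_of_le h1 (hi i0 (Finset.mem_univ _))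
    have h3 := mul_pos h2 (hw i)
    rwa [div_mul_cancel₀ _ (hw i).ne'] at h3
  -- |t| * |x i| ≤ θ * |x i|
  have hkey : |t| * |x i| ≤ θ * |x i| := by
    have ht : t * x i = ∑ j, M i j * x j := by
      have := congrFun hxe i
      simp [Matrix.mulVec, dotProduct, Pi.smul_apply] at this
      linarith [this]
    have habs : |t| * |x i| = |∑ j, M i j * x j| := by
      rw [← abs_mul, ht]
    have hstep : |∑ j, M i j * x j| ≤ ∑ j, M i j * (w j * (|x i| / w i)) := by
      refine le_trans (Finset.abs_sum_le_sum_abs _ _) (Finset.sum_le_sum fun j _ => ?_)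
      rw [abs_mul, abs_of_nonneg (hM i j)]
      refine mul_le_mul_of_nonneg_left ?_ (hM i j)
      have := hi j (Finset.mem_univ _)
      calc |x j| = (|x j| / w j) * w j := (div_mul_cancel₀ _ (hw j).ne').symm
        _ ≤ (|x i| / w i) * w j := mul_le_mul_of_nonneg_right this (hw j).le
        _ = w j * (|x i| / w i) := by ring
    have hsum : ∑ j, M i j * (w j * (|x i| / w i)) = (M.mulVec w i) * (|x i| / w i) := by
      simp [Matrix.mulVec, dotProduct, Finset.sum_mul]
      ring_nf
      exact Finset.sum_congr rfl fun j _ => by ring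
    calc |t| * |x i| = |∑ j, M i j * x j| := habs
      _ ≤ (M.mulVec w i) * (|x i| / w i) := by rw [← hsum]; exact hstep
      _ ≤ (θ * w i) * (|x i| / w i) := by
          exact mul_le_mul_of_nonneg_right (h i) (div_nonneg (abs_nonneg _) (hw i).le)
      _ = θ * (w i * (|x i| / w i)) := by ring
      _ = θ * |x i| := by rw [mul_div_cancel₀ _ (hw i).ne']
  exact le_trans (le_abs_self t) ((mul_le_mul_iff_of_pos_right hxi).1 hkey)

lemma eigSet_bddAbove (M : Matrix V V ℝ) (hM : ∀ i j, 0 ≤ M i j) :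
    BddAbove {t : ℝ | ∃ x : V → ℝ, x ≠ 0 ∧ M.mulVec x = t • x} := by
  refine ⟨∑ i, ∑ j, M i j, ?_⟩
  rintro t ⟨x, hx, hxe⟩
  refine eigen_le_of_wit M hM (fun _ => 1) (fun _ => one_pos) _ (fun i => ?_) t x hx hxe
  have h1 : M.mulVec (fun _ => 1) i = ∑ j, M i j := by
    simp [Matrix.mulVec, dotProduct]
  rw [h1, mul_one]
  exact Finset.single_le_sum (f := fun i => ∑ j, M i j)
    (fun i _ => Finset.sum_nonneg fun j _ => hM i j) (Finset.mem_univ i)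

lemma maxEig_le_of_wit (M : Matrix V V ℝ) (hM : ∀ i j, 0 ≤ M i j)
    (w : V → ℝ) (hw : ∀ i, 0 < w i) (θ : ℝ) (hθ : 0 ≤ θ)
    (h : ∀ i, M.mulVec w i ≤ θ * w i) : maxEig M ≤ θ := by
  refine Real.sSup_le ?_ hθ
  rintro t ⟨x, hx, hxe⟩
  exact eigen_le_of_wit M hM w hw θ h t x hx hxe


open scoped RealInnerProductSpace in

variable {V : Type} [Fintype V] [DecidableEq V]
open scoped RealInnerProductSpace

lemma le_maxEig (M : Matrix V V ℝ) (hH : M.IsHermitian)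
    (hbdd : BddAbove {t : ℝ | ∃ x : V → ℝ, x ≠ 0 ∧ M.mulVec x = t • x})
    (w : V → ℝ) (hw0 : ∀ i, 0 ≤ w i) (hwne : w ≠ 0) (θ : ℝ)
    (h : ∀ i, θ * w i ≤ M.mulVec w i) : θ ≤ maxEig M := by
  classical
  have hne : Nonempty V := by
    by_contra hc
    exact hwne (funext fun i => absurd ⟨i⟩ hc)
  set B := hH.eigenvectorBasis with hB
  set w' : EuclideanSpace ℝ V := (WithLp.equiv 2 (V → ℝ)).symm w with hw'
  have hw'app : ∀ i, w' i = w i := fun i => rfl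
  -- repr of M *ᵥ w
  have hMT : M.transpose = M := by
    ext i j
    have := congrFun (congrFun hH i) j
    simpa [Matrix.conjTranspose_apply] using this
  set Mw' : EuclideanSpace ℝ V := (WithLp.equiv 2 (V → ℝ)).symm (M.mulVec w) with hMw'
  have hrepr : ∀ j, B.repr Mw' j = hH.eigenvalues j * B.repr w' j := by
    intro j
    rw [B.repr_apply_apply, B.repr_apply_apply]
    have hdot : ⟪B j, Mw'⟫ = dotProduct (⇑(B j)) (M.mulVec w) := by
      rw [EuclideanSpace.inner_eq_star_dotProduct, dotProduct_comm]
      simp [Mw']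
    have hdot2 : ⟪B j, w'⟫ = dotProduct (⇑(B j)) w := by
      rw [EuclideanSpace.inner_eq_star_dotProduct, dotProduct_comm]
      simp [w']
    rw [hdot, hdot2, Matrix.dotProduct_mulVec, ← Matrix.mulVec_transpose, hMT,
      hH.mulVec_eigenvectorBasis, smul_dotProduct]
    simp [hB]
  have hPars : ∑ j, (B.repr w' j)^2 = ∑ i, (w i)^2 := by
    have h1 : ⟪B.repr w', B.repr w'⟫ = ⟪w', w'⟫ := B.repr.inner_map_map w' w'
    rw [PiLp.inner_apply, PiLp.inner_apply] at h1
    simpa [RCLike.inner_apply, sq, hw'app] using h1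
  have hExpand : ∑ i, w i * (M.mulVec w i) = ∑ j, hH.eigenvalues j * (B.repr w' j)^2 := by
    have h1 : ⟪w', Mw'⟫ = ⟪B.repr w', B.repr Mw'⟫ := (B.repr.inner_map_map w' Mw').symm
    rw [PiLp.inner_apply, PiLp.inner_apply] at h1
    simp only [RCLike.inner_apply, starRingEnd_apply, star_trivial] at h1
    calc ∑ i, w i * (M.mulVec w i) = ∑ j, (B.repr w' j) * (B.repr Mw' j) := by
          rw [show ∑ i, w i * (M.mulVec w i) = ∑ x, Mw' x * w' x from
            Finset.sum_congr rfl fun i _ => mul_comm _ _, h1]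
          exact Finset.sum_congr rfl fun j _ => mul_comm _ _
      _ = ∑ j, hH.eigenvalues j * (B.repr w' j)^2 := by
          refine Finset.sum_congr rfl fun j _ => ?_
          rw [hrepr j]; ring
  have hP : 0 < ∑ i, (w i)^2 := by
    obtain ⟨i0, hi0⟩ : ∃ i0, w i0 ≠ 0 := by
      by_contra hc; push_neg at hc; exact hwne (funext hc)
    refine Finset.sum_pos' (fun i _ => sq_nonneg _) ⟨i0, Finset.mem_univ _, by positivity⟩
  obtain ⟨jm, -, hjm⟩ := Finset.exists_max_image (Finset.univ : Finset V)
    hH.eigenvalues ⟨Classical.arbitrary V, Finset.mem_univ _⟩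
  have hthe : θ ≤ hH.eigenvalues jm := by
    have h1 : θ * ∑ i, (w i)^2 ≤ ∑ i, w i * (M.mulVec w i) := by
      rw [Finset.mul_sum]
      refine Finset.sum_le_sum fun i _ => ?_
      have := mul_le_mul_of_nonneg_left (h i) (hw0 i)
      calc θ * (w i)^2 = w i * (θ * w i) := by ring
        _ ≤ w i * (M.mulVec w i) := this
    have h2 : ∑ j, hH.eigenvalues j * (B.repr w' j)^2
        ≤ hH.eigenvalues jm * ∑ i, (w i)^2 := by
      rw [← hPars, Finset.mul_sum]
      refine Finset.sum_le_sum fun j _ => ?_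
      exact mul_le_mul_of_nonneg_right (hjm j (Finset.mem_univ _)) (sq_nonneg _)
    have := h1.trans (le_of_eq hExpand)
    have h3 : θ * ∑ i, (w i)^2 ≤ hH.eigenvalues jm * ∑ i, (w i)^2 := this.trans h2
    exact le_of_mul_le_mul_right (by linarith [h3]) hP
  refine hthe.trans (le_csSup hbdd ?_)
  refine ⟨⇑(B jm), ?_, hH.mulVec_eigenvectorBasis jm⟩
  intro hzero
  refine B.orthonormal.ne_zero jm ?_
  ext i
  exact congrFun hzero i


lemma adjMat_nonneg [DecidableEq V] (G : SimpleGraph V) : ∀ i j, 0 ≤ adjMat G i j := by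
  intro i j
  unfold adjMat
  split_ifs <;> norm_num

lemma qMat_nonneg [DecidableEq V] (G : SimpleGraph V) : ∀ i j, 0 ≤ qMat G i j := by
  intro i j
  unfold qMat
  rw [Matrix.add_apply]
  refine add_nonneg ?_ (adjMat_nonneg G i j)
  rw [Matrix.diagonal_apply]
  split_ifs
  · exact Finset.sum_nonneg fun w _ => adjMat_nonneg G i w
  · exact le_refl 0
  
lemma adjMat_symm [DecidableEq V] (G : SimpleGraph V) (i j : V) :
    adjMat G i j = adjMat G j i := by
  unfold adjMat
  by_cases h : G.Adj i j
  · rw [if_pos h, if_pos h.symm]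
  · rw [if_neg h, if_neg (fun h' => h h'.symm)]

lemma qMat_isHermitian [DecidableEq V] (G : SimpleGraph V) : (qMat G).IsHermitian := by
  unfold Matrix.IsHermitian
  ext i j
  rw [Matrix.conjTranspose_apply, star_trivial]
  unfold qMat
  rw [Matrix.add_apply, Matrix.add_apply, adjMat_symm G j i]
  congr 1
  rw [Matrix.diagonal_apply, Matrix.diagonal_apply]
  by_cases h : i = j
  · subst h; rfl
  · rw [if_neg h, if_neg (fun h' => h h'.symm)]

end AuxSpectral

noncomputable def wvec (n s a : ℕ) (p q r : ℝ) : Fin n → ℝ :=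
  fun j => if (j : ℕ) < s then p else if (j : ℕ) < s + a then q else r

section ModelSum
variable (n s a : ℕ) (p q r : ℝ)

lemma sum_wvec (hsa : s + a ≤ n) :
    ∑ j : Fin n, wvec n s a p q r j = s * p + a * q + ((n - (s+a) : ℕ) : ℝ) * r := by
  unfold wvec
  rw [Fin.sum_univ_eq_sum_range (fun m => if m < s then p else if m < s + a then q else r) n]
  rw [Finset.range_eq_Ico, ← Finset.sum_Ico_consecutive _ (Nat.zero_le (s+a)) hsa,
      ← Finset.sum_Ico_consecutive _ (Nat.zero_le s) (Nat.le_add_right s a)]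
  have e1 : ∑ m ∈ Finset.Ico 0 s, (if m < s then p else if m < s + a then q else r) = s * p := by
    rw [Finset.sum_congr rfl (fun m hm => if_pos (Finset.mem_Ico.1 hm).2)]
    simp [mul_comm]
  have e2 : ∑ m ∈ Finset.Ico s (s+a), (if m < s then p else if m < s + a then q else r)
      = a * q := by
    have hc : ∀ m ∈ Finset.Ico s (s+a), (if m < s then p else if m < s + a then q else r) = q := by
      intro m hm
      obtain ⟨hm1, hm2⟩ := Finset.mem_Ico.1 hm
      rw [if_neg (by omega), if_pos hm2]
    rw [Finset.sum_congr rfl hc]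
    simp [mul_comm]
  have e3 : ∑ m ∈ Finset.Ico (s+a) n, (if m < s then p else if m < s + a then q else r)
      = ((n - (s+a) : ℕ) : ℝ) * r := by
    have hc : ∀ m ∈ Finset.Ico (s+a) n, (if m < s then p else if m < s + a then q else r) = r := by
      intro m hm
      have := (Finset.mem_Ico.1 hm).1
      rw [if_neg (by omega), if_neg (by omega)]
    rw [Finset.sum_congr rfl hc]
    simp [mul_comm]
  rw [e1, e2, e3]

lemma sum_small (hsa : s + a ≤ n) :
    ∑ j : Fin n, (if (j : ℕ) < s then p else 0) = s * p := by
  rw [Fin.sum_univ_eq_sum_range (fun m => if m < s then p else 0) n]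
  rw [Finset.range_eq_Ico, ← Finset.sum_Ico_consecutive _ (Nat.zero_le s) (by omega : s ≤ n)]
  have e1 : ∑ m ∈ Finset.Ico 0 s, (if m < s then p else 0) = s * p := by
    rw [Finset.sum_congr rfl (fun m hm => if_pos (Finset.mem_Ico.1 hm).2)]
    simp [mul_comm]
  have e2 : ∑ m ∈ Finset.Ico s n, (if m < s then p else 0) = 0 := by
    rw [Finset.sum_congr rfl (fun m hm => if_neg (by
      have := (Finset.mem_Ico.1 hm).1; omega))]
    simp
  rw [e1, e2, add_zero]

lemma sum_big (hsa : s + a ≤ n) :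
    ∑ j : Fin n, (if s + a ≤ (j : ℕ) then r else 0) = ((n - (s+a) : ℕ) : ℝ) * r := by
  rw [Fin.sum_univ_eq_sum_range (fun m => if s + a ≤ m then r else 0) n]
  rw [Finset.range_eq_Ico, ← Finset.sum_Ico_consecutive _ (Nat.zero_le (s+a)) hsa]
  have e1 : ∑ m ∈ Finset.Ico 0 (s+a), (if s + a ≤ m then r else 0) = 0 := by
    rw [Finset.sum_congr rfl (fun m hm => if_neg (by
      have := (Finset.mem_Ico.1 hm).2; omega))]
    simp
  have e2 : ∑ m ∈ Finset.Ico (s+a) n, (if s + a ≤ m then r else 0)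
      = ((n - (s+a) : ℕ) : ℝ) * r := by
    rw [Finset.sum_congr rfl (fun m hm => if_pos (Finset.mem_Ico.1 hm).1)]
    simp [mul_comm]
  rw [e1, e2, zero_add]

lemma sum_point (i : Fin n) (c : Fin n → ℝ) :
    ∑ j : Fin n, (if j = i then c j else 0) = c i := by
  simpa using Finset.sum_ite_eq' Finset.univ i c

lemma adj_sum (hsa : s + a ≤ n) (i : Fin n) :
    ∑ j, adjMat (modelA n s a) i j * wvec n s a p q r j =
      if (i : ℕ) < s then s * p + a * q + ((n - (s+a) : ℕ) : ℝ) * r - p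
      else if (i : ℕ) < s + a then s * p
      else s * p + ((n - (s+a) : ℕ) : ℝ) * r - r := by
  by_cases hi : (i : ℕ) < s
  · rw [if_pos hi]
    have hpt : ∀ j : Fin n, adjMat (modelA n s a) i j * wvec n s a p q r j
        = wvec n s a p q r j - (if j = i then wvec n s a p q r j else 0) := by
      intro j
      by_cases hj : j = i
      · subst hj
        rw [if_pos rfl]
        have : ¬ (modelA n s a).Adj j j := SimpleGraph.irrefl _
        rw [adjMat, if_neg this]
        ring
      · have hadj : (modelA n s a).Adj i j := show i ≠ j ∧ _ from ⟨fun h => hj h.symm, Or.inl hi⟩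
        rw [adjMat, if_pos hadj, if_neg hj]
        ring
    rw [Finset.sum_congr rfl (fun j _ => hpt j), Finset.sum_sub_distrib,
        sum_wvec n s a p q r hsa, sum_point n i]
    rw [wvec, if_pos hi]
  · by_cases hi2 : (i : ℕ) < s + a
    · rw [if_neg hi, if_pos hi2]
      have hpt : ∀ j : Fin n, adjMat (modelA n s a) i j * wvec n s a p q r j
          = (if (j : ℕ) < s then p else 0) := by
        intro j
        by_cases hjs : (j : ℕ) < s
        · have hne : i ≠ j := fun h => by rw [h] at hi; exact hi hjs
          have hadj : (modelA n s a).Adj i j := show i ≠ j ∧ _ from ⟨hne, Or.inr (Or.inl hjs)⟩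
          rw [adjMat, if_pos hadj, if_pos hjs, wvec, if_pos hjs, one_mul]
        · have hnadj : ¬ (modelA n s a).Adj i j := by
            intro hh; obtain ⟨-, h | h | ⟨h, -⟩⟩ := (show i ≠ j ∧ _ from hh) <;> omega
          rw [adjMat, if_neg hnadj, if_neg hjs, zero_mul]
      rw [Finset.sum_congr rfl (fun j _ => hpt j), sum_small n s a p hsa]
    · rw [if_neg hi, if_neg hi2]
      have hpt : ∀ j : Fin n, adjMat (modelA n s a) i j * wvec n s a p q r j
          = (if (j : ℕ) < s then p else 0) + (if s + a ≤ (j : ℕ) then r else 0)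
            - (if j = i then r else 0) := by
        intro j
        by_cases hj : j = i
        · subst hj
          have : ¬ (modelA n s a).Adj j j := SimpleGraph.irrefl _
          rw [adjMat, if_neg this, if_neg (by omega : ¬ (j:ℕ) < s),
              if_pos (by omega : s + a ≤ (j:ℕ)), if_pos rfl]
          ring
        · by_cases hjs : (j : ℕ) < s
          · have hadj : (modelA n s a).Adj i j := show i ≠ j ∧ _ from ⟨fun h => hj h.symm, Or.inr (Or.inl hjs)⟩
            rw [adjMat, if_pos hadj, wvec, if_pos hjs, if_pos hjs,
                if_neg (by omega : ¬ s + a ≤ (j:ℕ)), if_neg hj]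
            ring
          · by_cases hjb : s + a ≤ (j : ℕ)
            · have hadj : (modelA n s a).Adj i j := show i ≠ j ∧ _ from
                ⟨fun h => hj h.symm, Or.inr (Or.inr ⟨by omega, hjb⟩)⟩
              rw [adjMat, if_pos hadj, wvec, if_neg hjs, if_neg (by omega : ¬ (j:ℕ) < s + a),
                  if_neg hjs, if_pos hjb, if_neg hj]
              ring
            · have hnadj : ¬ (modelA n s a).Adj i j := by
                intro hh; obtain ⟨-, h | h | ⟨-, h⟩⟩ := (show i ≠ j ∧ _ from hh) <;> omega
              rw [adjMat, if_neg hnadj, if_neg hjs, if_neg hjb, if_neg hj, zero_mul]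
              ring
      rw [Finset.sum_congr rfl (fun j _ => hpt j), Finset.sum_sub_distrib,
          Finset.sum_add_distrib, sum_small n s a p hsa, sum_big n s a r hsa, sum_point n i]

lemma deg_eq (hsa : s + a ≤ n) (i : Fin n) :
    ∑ j, adjMat (modelA n s a) i j =
      if (i : ℕ) < s then (s : ℝ) + a + ((n - (s+a) : ℕ) : ℝ) - 1
      else if (i : ℕ) < s + a then (s : ℝ)
      else (s : ℝ) + ((n - (s+a) : ℕ) : ℝ) - 1 := by
  have h1 : ∑ j, adjMat (modelA n s a) i j
      = ∑ j, adjMat (modelA n s a) i j * wvec n s a 1 1 1 j := by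
    refine Finset.sum_congr rfl fun j _ => ?_
    have : wvec n s a 1 1 1 j = 1 := by unfold wvec; split_ifs <;> rfl
    rw [this, mul_one]
  rw [h1, adj_sum n s a 1 1 1 hsa]
  split_ifs <;> ring

lemma qmul_eq (hsa : s + a ≤ n) (i : Fin n) :
    (qMat (modelA n s a)).mulVec (wvec n s a p q r) i =
      (if (i : ℕ) < s then (s : ℝ) + a + ((n - (s+a) : ℕ) : ℝ) - 1
        else if (i : ℕ) < s + a then (s : ℝ)
        else (s : ℝ) + ((n - (s+a) : ℕ) : ℝ) - 1) * wvec n s a p q r i +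
      (if (i : ℕ) < s then s * p + a * q + ((n - (s+a) : ℕ) : ℝ) * r - p
        else if (i : ℕ) < s + a then s * p
        else s * p + ((n - (s+a) : ℕ) : ℝ) * r - r) := by
  rw [← deg_eq n s a hsa i, ← adj_sum n s a p q r hsa i]
  unfold qMat
  rw [Matrix.add_mulVec]
  simp only [Pi.add_apply]
  congr 1
  simp [Matrix.mulVec_diagonal]

end ModelSum

set_option maxHeartbeats 1000000


lemma key3 (u w : ℝ) : (2*3-2+u^2)*(3:ℝ)*((2*(2*3-2+u^2)+(3:ℝ)-4)*((3:ℝ)+(2*3-2+u^2)+(2*3-2+u^2-1+w^2)-2)+4)*((3:ℝ)+(2*3-2+u^2)+(2*3-2+u^2-1+w^2)-2) + (2*3-2+u^2-1+w^2)*(3:ℝ)*((2*3-2+u^2-1+w^2)+(2*3-2+u^2)-4+((3:ℝ)+(2*3-2+u^2)+(2*3-2+u^2-1+w^2)-2))*((3:ℝ)+(2*3-2+u^2)+(2*3-2+u^2-1+w^2)-2)^2 ≤ (((2*3-2+u^2-1+w^2)+(2*3-2+u^2)-4)*((3:ℝ)+(2*3-2+u^2)+(2*3-2+u^2-1+w^2)-2)+4)*((2*3-2+u^2-1+w^2)+(2*3-2+u^2)-4+((3:ℝ)+(2*3-2+u^2)+(2*3-2+u^2-1+w^2)-2))*((2*(2*3-2+u^2)+(3:ℝ)-4)*((3:ℝ)+(2*3-2+u^2)+(2*3-2+u^2-1+w^2)-2)+4)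 := by
  have hP : (0:ℝ) ≤ 6384 + 6536*w^2 + 1836*w^4 + 204*w^6 + 8*w^8 + 17136*u^2 + 10972*u^2*w^2 + 2190*u^2*w^4 + 168*u^2*w^6 + 4*u^2*w^8 + 14216*u^4 + 6216*u^4*w^2 + 810*u^4*w^4 + 32*u^4*w^6 + 5304*u^6 + 1480*u^6*w^2 + 96*u^6*w^4 + 936*u^8 + 128*u^8*w^2 + 64*u^10 := by positivity
  have hid : ((((2*3-2+u^2-1+w^2)+(2*3-2+u^2)-4)*((3:ℝ)+(2*3-2+u^2)+(2*3-2+u^2-1+w^2)-2)+4)*((2*3-2+u^2-1+w^2)+(2*3-2+u^2)-4+((3:ℝ)+(2*3-2+u^2)+(2*3-2+u^2-1+w^2)-2))*((2*(2*3-2+u^2)+(3:ℝ)-4)*((3:ℝ)+(2*3-2+u^2)+(2*3-2+u^2-1+w^2)-2)+4)) - ((2*3-2+u^2)*(3:ℝ)*((2*(2*3-2+u^2)+(3:ℝ)-4)*((3:ℝ)+(2*3-2+u^2)+(2*3-2+u^2-1+w^2)-2)+4)*((3:ℝ)+(2*3-2+u^2)+(2*3-2+u^2-1+w^2)-2) +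 (2*3-2+u^2-1+w^2)*(3:ℝ)*((2*3-2+u^2-1+w^2)+(2*3-2+u^2)-4+((3:ℝ)+(2*3-2+u^2)+(2*3-2+u^2-1+w^2)-2))*((3:ℝ)+(2*3-2+u^2)+(2*3-2+u^2-1+w^2)-2)^2) = 6384 + 6536*w^2 + 1836*w^4 + 204*w^6 + 8*w^8 + 17136*u^2 + 10972*u^2*w^2 + 2190*u^2*w^4 + 168*u^2*w^6 + 4*u^2*w^8 + 14216*u^4 + 6216*u^4*w^2 + 810*u^4*w^4 + 32*u^4*w^6 + 5304*u^6 + 1480*u^6*w^2 + 96*u^6*w^4 + 936*u^8 + 128*u^8*w^2 + 64*u^10 := by ring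
  linarith

lemma key4 (u v w : ℝ) : (2*(4+v^2)-2+u^2)*(4+v^2)*((2*(2*(4+v^2)-2+u^2)+(4+v^2)-4)*((4+v^2)+(2*(4+v^2)-2+u^2)+(w^2)-2)+4)*((4+v^2)+(2*(4+v^2)-2+u^2)+(w^2)-2) + (w^2)*(4+v^2)*((w^2)+(2*(4+v^2)-2+u^2)-4+((4+v^2)+(2*(4+v^2)-2+u^2)+(w^2)-2))*((4+v^2)+(2*(4+v^2)-2+u^2)+(w^2)-2)^2 ≤ (((w^2)+(2*(4+v^2)-2+u^2)-4)*((4+v^2)+(2*(4+v^2)-2+u^2)+(w^2)-2)+4)*((w^2)+(2*(4+v^2)-2+u^2)-4+((4+v^2)+(2*(4+v^2)-2+u^2)+(w^2)-2))*((2*(2*(4+v^2)-2+u^2)+(4+v^2)-4)*((4+v^2)+(2*(4+v^2)-2+u^2)+(w^2)-2)+4) := by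
  have hP : (0:ℝ) ≤ 800 + 9136*w^2 + 3240*w^4 + 392*w^6 + 16*w^8 + 14208*v^2 + 19648*v^2*w^2 + 4688*v^2*w^4 + 372*v^2*w^6 + 8*v^2*w^8 + 21656*v^4 + 15024*v^4*w^2 + 2232*v^4*w^4 + 88*v^4*w^6 + 12952*v^6 + 4948*v^6*w^2 + 352*v^6*w^4 + 3504*v^8 + 600*v^8*w^2 + 360*v^10 + 8624*u^2 + 8720*u^2*w^2 + 2008*u^2*w^4 + 164*u^2*w^6 + 4*u^2*w^8 + 21280*u^2*v^2 + 12852*u^2*v^2*w^2 + 1874*u^2*v^2*w^4 + 76*u^2*v^2*w^6 + 17452*u^2*v^4 + 6184*u^2*v^4*w^2 + 436*u^2*v^4*w^4 + 5986*u^2*v^6 + 980*u^2*v^6*w^2 + 744*u^2*v^8 + 4968*u^4 + 2712*u^4*w^2 + 388*u^4*w^4 + 16*u^4*w^6 + 7652*u^4*v^2 + 2552*u^4*v^2*w^2 + 178*u^4*v^2*w^4 + 3784*u^4*v^4 + 596*u^4*v^4*w^2 + 610*u^4*v^6 + 1096*u^6 + 348*u^6*w^2 + 24*u^6*w^4 +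 1050*u^6*v^2 + 160*u^6*v^2*w^2 + 248*u^6*v^4 + 108*u^8 + 16*u^8*w^2 + 50*u^8*v^2 + 4*u^10 := by positivity
  have hid : ((((w^2)+(2*(4+v^2)-2+u^2)-4)*((4+v^2)+(2*(4+v^2)-2+u^2)+(w^2)-2)+4)*((w^2)+(2*(4+v^2)-2+u^2)-4+((4+v^2)+(2*(4+v^2)-2+u^2)+(w^2)-2))*((2*(2*(4+v^2)-2+u^2)+(4+v^2)-4)*((4+v^2)+(2*(4+v^2)-2+u^2)+(w^2)-2)+4)) - ((2*(4+v^2)-2+u^2)*(4+v^2)*((2*(2*(4+v^2)-2+u^2)+(4+v^2)-4)*((4+v^2)+(2*(4+v^2)-2+u^2)+(w^2)-2)+4)*((4+v^2)+(2*(4+v^2)-2+u^2)+(w^2)-2) + (w^2)*(4+v^2)*((w^2)+(2*(4+v^2)-2+u^2)-4+((4+v^2)+(2*(4+v^2)-2+u^2)+(w^2)-2))*((4+v^2)+(2*(4+v^2)-2+u^2)+(w^2)-2)^2) = 800 + 9136*w^2 + 3240*w^4 + 392*w^6 + 16*w^8 + 14208*v^2 + 19648*v^2*w^2 + 4688*v^2*w^4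 + 372*v^2*w^6 + 8*v^2*w^8 + 21656*v^4 + 15024*v^4*w^2 + 2232*v^4*w^4 + 88*v^4*w^6 + 12952*v^6 + 4948*v^6*w^2 + 352*v^6*w^4 + 3504*v^8 + 600*v^8*w^2 + 360*v^10 + 8624*u^2 + 8720*u^2*w^2 + 2008*u^2*w^4 + 164*u^2*w^6 + 4*u^2*w^8 + 21280*u^2*v^2 + 12852*u^2*v^2*w^2 + 1874*u^2*v^2*w^4 + 76*u^2*v^2*w^6 + 17452*u^2*v^4 + 6184*u^2*v^4*w^2 + 436*u^2*v^4*w^4 + 5986*u^2*v^6 + 980*u^2*v^6*w^2 + 744*u^2*v^8 + 4968*u^4 + 2712*u^4*w^2 + 388*u^4*w^4 + 16*u^4*w^6 + 7652*u^4*v^2 + 2552*u^4*v^2*w^2 + 178*u^4*v^2*w^4 + 3784*u^4*v^4 + 596*u^4*v^4*w^2 + 610*u^4*v^6 + 1096*u^6 + 348*u^6*w^2 + 24*u^6*w^4 + 1050*u^6*v^2 + 160*u^6*v^2*w^2 + 248*u^6*v^4 + 108*u^8 + 16*u^8*w^2 + 50*u^8*v^2 + 4*u^10 := by ring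
  linarith

lemma key (S A C : ℝ) (h2 : 2*S-2 ≤ A) (h3 : 0 ≤ C)
    (h4 : 2*(A-2) ≤ (S+A+C-6)*(S-2)) (h5 : S = 3 ∨ 4 ≤ S) :
    A*S*((2*A+S-4)*(S+A+C-2)+4)*(S+A+C-2) + C*S*(C+A-4+(S+A+C-2))*(S+A+C-2)^2
      ≤ ((C+A-4)*(S+A+C-2)+4)*(C+A-4+(S+A+C-2))*((2*A+S-4)*(S+A+C-2)+4) := by
  obtain ⟨u, hu⟩ : ∃ u:ℝ, A = 2*S-2+u^2 :=
    ⟨Real.sqrt (A-(2*S-2)), by rw [Real.sq_sqrt (by linarith)]; ring⟩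
  rcases h5 with h5 | h5
  · subst h5
    obtain ⟨w, hw⟩ : ∃ w:ℝ, C = A-1+w^2 :=
      ⟨Real.sqrt (C-(A-1)), by rw [Real.sq_sqrt (by nlinarith)]; ring⟩
    subst hu; subst hw
    exact key3 u w
  · obtain ⟨v, hv⟩ : ∃ v:ℝ, S = 4+v^2 :=
      ⟨Real.sqrt (S-4), by rw [Real.sq_sqrt (by linarith)]; ring⟩
    subst hu; subst hv
    obtain ⟨w, hw⟩ : ∃ w:ℝ, C = w^2 := ⟨Real.sqrt C, by rw [Real.sq_sqrt h3]⟩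
    subst hw
    exact key4 u v w


lemma classS (S A C E p q : ℝ) (hS : 3 ≤ S) (hA : 2*S-2 ≤ A) (hC : 0 ≤ C)
    (h4 : 2*(A-2) ≤ (S+A+C-6)*(S-2)) (h5 : S = 3 ∨ 4 ≤ S)
    (hN2 : 0 < S+A+C-2) (hG : 0 < 2*(S+A+C)-6-S)
    (hE : E = 4/(S+A+C-2)) (hp : p = (2*A+S-4+E)/S) (hq : q = S*p/(2*(S+A+C)-6-S)) :
    (S+A+C-1)*p + (S*p + A*q + C - p) ≤ (2*(S+A+C)-6+E)*p := by
  have hkey := key S A C hA hC h4 h5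
  have hS0 : (0:ℝ) < S := by linarith
  subst hq hp hE
  rw [← sub_nonneg]
  have hrw : (2 * (S + A + C) - 6 + 4 / (S + A + C - 2)) *
        ((2 * A + S - 4 + 4 / (S + A + C - 2)) / S) -
      ((S + A + C - 1) * ((2 * A + S - 4 + 4 / (S + A + C - 2)) / S) +
        (S * ((2 * A + S - 4 + 4 / (S + A + C - 2)) / S) +
          A * (S * ((2 * A + S - 4 + 4 / (S + A + C - 2)) / S) / (2 * (S + A + C) - 6 - S)) +
          C - (2 * A + S - 4 + 4 / (S + A + C - 2)) / S))
      = (((C+A-4)*(S+A+C-2)+4)*(C+A-4+(S+A+C-2))*((2*A+S-4)*(S+A+C-2)+4)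
        - (A*S*((2*A+S-4)*(S+A+C-2)+4)*(S+A+C-2)
          + C*S*(C+A-4+(S+A+C-2))*(S+A+C-2)^2))
        / (S*(2*(S+A+C)-6-S)*(S+A+C-2)^2) := by
    field_simp
    ring
  rw [hrw]
  apply div_nonneg (by linarith) (by positivity)


lemma classS_core (N S A C E p q : ℝ) (hS : 3 ≤ S) (hA : 2*S-2 ≤ A) (hC : 0 ≤ C)
    (hNC : N = S+A+C)
    (h4 : 2*(A-2) ≤ (N-6)*(S-2)) (h5 : S = 3 ∨ 4 ≤ S)
    (hN2 : 0 < N-2) (hG : 0 < 2*N-6-S)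
    (hE : E = 4/(N-2)) (hp : p = (2*A+S-4+E)/S) (hq : q = S*p/(2*N-6-S)) :
    (S+A+C-1)*p + (S*p + A*q + C*1 - p) ≤ (2*N-6+E)*p := by
  subst hNC
  have h := classS S A C E p q hS hA hC (by linarith [h4]) h5 (by linarith) (by linarith)
    hE hp hq
  calc (S+A+C-1)*p + (S*p + A*q + C*1 - p)
      = (S + A + C - 1) * p + (S * p + A * q + C - p) := by ring
    _ ≤ (2*(S+A+C)-6+E)*p := h

/-- Lemma: for `k ≥ 2`, `n ≥ 2k + 6`, `n ≥ (k+1)s - 2k + 2` and `s > 2`,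
`q(K_s ∨ ((ks-2k+2)K_1 ∪ K_{n-(k+1)s+2k-2})) ≤ q(K_2 ∨ (2K_1 ∪ K_{n-4}))`. -/
theorem stmt_14 (n s k : ℕ) (hk : 2 ≤ k) (hs : 2 ≤ s)
    (h1 : 2 * k + 6 ≤ n) (h2 : (k + 1) * s + 2 ≤ n + 2 * k) (hs2 : 2 < s) :
    qRad (modelA n s (k * s - 2 * k + 2)) ≤ qRad (modelA n 2 2) := by
  set a := k * s - 2 * k + 2 with ha
  obtain ⟨u, hu⟩ : ∃ u, u = k * (s - 2) := ⟨_, rfl⟩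
  have hmulu : k * s = u + 2 * k := by
    rw [hu]
    calc k * s = k * ((s - 2) + 2) := by rw [Nat.sub_add_cancel hs]
      _ = k * (s - 2) + k * 2 := Nat.mul_add k (s - 2) 2
      _ = k * (s - 2) + 2 * k := by ring
  have hu2 : 2 * (s - 2) ≤ u := by rw [hu]; exact Nat.mul_le_mul_right _ hk
  have h2l : u + 2 * k + s + 2 ≤ n + 2 * k := by
    have e : (k + 1) * s = k * s + s := by ring
    rw [e, hmulu] at h2
    omega
  have haa : a = u + 2 := by rw [ha, hmulu]; omega
  have hsa : s + a ≤ n := by omega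
  have hs5 : s + 5 ≤ n := by omega
  have ha4 : 4 ≤ a := by omega
  have h2A : 2 * s ≤ a + 2 := by omega
  have hn10 : 10 ≤ n := by omega
  have hSr : (3:ℝ) ≤ (s:ℝ) := by exact_mod_cast hs2
  have haaR : (a:ℝ) = (u:ℝ) + 2 := by exact_mod_cast haa
  have hAr : 2 * (s:ℝ) - 2 ≤ (a:ℝ) := by
    have h2A' : 2 * s ≤ u + 4 := by omega
    have h2AR : 2 * (s:ℝ) ≤ (u:ℝ) + 4 := by exact_mod_cast h2A'
    linarith
  have hCr : (s:ℝ) + (a:ℝ) ≤ (n:ℝ) := by exact_mod_cast hsa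
  have hs5R : (s:ℝ) + 5 ≤ (n:ℝ) := by exact_mod_cast hs5
  have hn10R : (10:ℝ) ≤ (n:ℝ) := by exact_mod_cast hn10
  have ha4R : (4:ℝ) ≤ (a:ℝ) := by exact_mod_cast ha4
  have hN2 : (0:ℝ) < (n:ℝ) - 2 := by linarith
  have hG : (0:ℝ) < 2 * (n:ℝ) - 6 - (s:ℝ) := by linarith
  have h4R : 2 * ((a:ℝ) - 2) ≤ ((n:ℝ) - 6) * ((s:ℝ) - 2) := by
    have hAu : (a:ℝ) = (k:ℝ) * ((s:ℝ) - 2) + 2 := by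
      rw [haa, hu]
      push_cast [Nat.cast_sub hs]
      ring
    have hkR : 2 * (k:ℝ) + 6 ≤ (n:ℝ) := by exact_mod_cast h1
    have hprod := mul_le_mul_of_nonneg_right
      (show 2 * (k:ℝ) ≤ (n:ℝ) - 6 by linarith)
      (show (0:ℝ) ≤ (s:ℝ) - 2 by linarith)
    nlinarith [hprod]
  have h5R : (s:ℝ) = 3 ∨ (4:ℝ) ≤ (s:ℝ) := by
    rcases (show s = 3 ∨ 4 ≤ s by omega) with h | h
    · left; exact_mod_cast h
    · right; exact_mod_cast h
  have hCC : ((n - (s + a) : ℕ) : ℝ) = (n:ℝ) - (s:ℝ) - (a:ℝ) := by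
    rw [Nat.cast_sub hsa]
    push_cast
    ring
  set E := 4 / ((n:ℝ) - 2) with hE
  set θ := 2 * (n:ℝ) - 6 + E with hθ
  set p := (2 * (a:ℝ) + (s:ℝ) - 4 + E) / (s:ℝ) with hp
  set q := (s:ℝ) * p / (2 * (n:ℝ) - 6 - (s:ℝ)) with hq
  have hS0 : (0:ℝ) < (s:ℝ) := by linarith
  have hEpos : 0 < E := by rw [hE]; positivity
  have hppos : 0 < p := by
    rw [hp]
    exact div_pos (by linarith) hS0
  have hqpos : 0 < q := by
    rw [hq]
    exact div_pos (mul_pos hS0 hppos) hG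
  have hθpos : (0:ℝ) ≤ θ := by rw [hθ]; linarith
  have hE4 : E * ((n:ℝ) - 2) = 4 := by rw [hE]; field_simp
  have hup : qRad (modelA n s a) ≤ θ := by
    refine maxEig_le_of_wit _ (qMat_nonneg _) (wvec n s a p q 1) ?_ θ hθpos ?_
    · intro i
      unfold wvec
      split_ifs
      exacts [hppos, hqpos, one_pos]
    · intro i
      rw [qmul_eq n s a p q 1 hsa i, hCC]
      unfold wvec
      by_cases hi : (i:ℕ) < s
      · simp only [if_pos hi]
        rw [hθ]
        exact classS_core (n:ℝ) (s:ℝ) (a:ℝ) ((n:ℝ) - (s:ℝ) - (a:ℝ)) E p q hSr hAr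
          (by linarith) (by ring) h4R h5R hN2 hG hE hp hq
      · by_cases hi2 : (i:ℕ) < s + a
        · simp only [if_neg hi, if_pos hi2]
          rw [hθ]
          have hq' : (s:ℝ) * p = q * (2 * (n:ℝ) - 6 - (s:ℝ)) := by
            rw [hq]
            field_simp
          nlinarith [mul_nonneg hqpos.le hEpos.le, hq']
        · simp only [if_neg hi, if_neg hi2]
          rw [hθ]
          have hp' : (s:ℝ) * p = 2 * (a:ℝ) + (s:ℝ) - 4 + E := by
            rw [hp]
            field_simp
          nlinarith [hp']
  have hsa2 : 2 + 2 ≤ n := by omega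
  have hCC2 : ((n - (2 + 2) : ℕ) : ℝ) = (n:ℝ) - (2:ℝ) - (2:ℝ) := by
    rw [Nat.cast_sub hsa2]
    push_cast
    ring
  have hlow : θ ≤ qRad (modelA n 2 2) := by
    refine le_maxEig _ (qMat_isHermitian _) (eigSet_bddAbove _ (qMat_nonneg _))
      (wvec n 2 2 ((n:ℝ)) 0 ((n:ℝ) - 2)) ?_ ?_ θ ?_
    · intro i
      unfold wvec
      split_ifs
      · linarith
      · exact le_refl 0
      · linarith
    · intro hzero
      have h0 : (0:ℕ) < n := by omega
      have hz := congrFun hzero ⟨0, h0⟩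
      rw [Pi.zero_apply] at hz
      unfold wvec at hz
      rw [if_pos (show ((⟨0, h0⟩ : Fin n) : ℕ) < 2 from by norm_num)] at hz
      linarith
    · intro i
      rw [qmul_eq n 2 2 ((n:ℝ)) 0 ((n:ℝ) - 2) hsa2 i, hCC2]
      unfold wvec
      by_cases hi : (i:ℕ) < 2
      · simp only [if_pos hi]
        rw [hθ]
        push_cast
        have hEN : E * (n:ℝ) ≤ 8 := by
          rw [hE, div_mul_eq_mul_div, div_le_iff₀ hN2]
          linarith
        nlinarith [hEN]
      · by_cases hi2 : (i:ℕ) < 2 + 2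
        · simp only [if_neg hi, if_pos hi2]
          push_cast
          nlinarith [hθpos, hn10R]
        · simp only [if_neg hi, if_neg hi2]
          rw [hθ]
          push_cast
          nlinarith [hE4]
  exact le_trans hup hlow
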